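/- Let Λ be a numerical semigroup of rank k(Λ) ≥ 2, with r right generators and σ strong generators. Then Λ has exactly r(r−1)/2 + σ grandchildren. -/
import Mathlib


/-- A numerical semigroup: a cofinite submonoid of ℕ, viewed as a set of naturals. -/
def IsNumericalSemigroup (S : Set ℕ) : Prop :=
  0 ∈ S ∧ (∀ a ∈ S, ∀ b ∈ S, a + b ∈ S) ∧ ∃ N : ℕ, ∀ n : ℕ, N ≤ n → n ∈ S

/-- The conductor: the smallest `N` such that every `n ≥ N` belongs to `S`. -/
noncomputable def sgConductor (S : Set ℕ) : ℕ :=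
  sInf {N : ℕ | ∀ n : ℕ, N ≤ n → n ∈ S}

/-- The genus: the number of gaps. -/
noncomputable def sgGenus (S : Set ℕ) : ℕ :=
  Sᶜ.ncard

/-- The rank `k(Λ) = c(Λ) - g(Λ)`. -/
noncomputable def sgRank (S : Set ℕ) : ℕ :=
  sgConductor S - sgGenus S

/-- The multiplicity: the smallest nonzero element. -/
noncomputable def sgMultiplicity (S : Set ℕ) : ℕ :=
  sInf {n : ℕ | n ∈ S ∧ n ≠ 0}

/-- The Frobenius number: the largest gap, i.e. the conductor minus one. -/
noncomputable def sgFrobenius (S : Set ℕ) : ℕ :=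
  sgConductor S - 1

/-- `sgElem S j` is the element `λ_j` of `S = {λ_0 = 0 < λ_1 < λ_2 < ⋯}`. -/
noncomputable def sgElem (S : Set ℕ) (j : ℕ) : ℕ :=
  Nat.nth (· ∈ S) j

/-- The jump `u_j = λ_{j+1} - λ_j`. -/
noncomputable def sgJump (S : Set ℕ) (j : ℕ) : ℕ :=
  sgElem S (j + 1) - sgElem S j

/-- The left elements: elements of `S` smaller than the Frobenius number. -/
def sgLeftElements (S : Set ℕ) : Set ℕ :=
  {x : ℕ | x ∈ S ∧ x + 1 < sgConductor S}

/-- A minimal generator: a nonzero element not the sum of two nonzero elements. -/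
def IsMinimalGenerator (S : Set ℕ) (x : ℕ) : Prop :=
  x ∈ S ∧ x ≠ 0 ∧ ¬ ∃ a ∈ S, ∃ b ∈ S, a ≠ 0 ∧ b ≠ 0 ∧ a + b = x

/-- A right generator: a minimal generator larger than the Frobenius number. -/
def IsRightGenerator (S : Set ℕ) (x : ℕ) : Prop :=
  IsMinimalGenerator S x ∧ sgFrobenius S < x

/-- A strong generator: a right generator `μ` such that `μ + m(Λ)` is a minimal
generator of `Λ ∖ {μ}`. -/
noncomputable def IsStrongGenerator (S : Set ℕ) (x : ℕ) : Prop :=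
  IsRightGenerator S x ∧ IsMinimalGenerator (S \ {x}) (x + sgMultiplicity S)

/-- A new generator of `Λ`: a minimal generator of `Λ` that is not a minimal
generator of `Λ ∪ {F(Λ)}`. -/
noncomputable def IsNewGenerator (S : Set ℕ) (x : ℕ) : Prop :=
  IsMinimalGenerator S x ∧ ¬ IsMinimalGenerator (S ∪ {sgFrobenius S}) x

/-- `x` (an element `λ_s ≥ c(Λ)`) is an order-`p` seed of `Λ` if
`x + λ_p ≠ λ_i + λ_j` for all `p < i ≤ j < s`, i.e. for all `i ≤ j` with
`p < i` and `λ_j < x`. -/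
noncomputable def IsSeed (S : Set ℕ) (p x : ℕ) : Prop :=
  sgConductor S ≤ x ∧ ∀ i j : ℕ, p < i → i ≤ j → sgElem S j < x →
    x + sgElem S p ≠ sgElem S i + sgElem S j

/-- `T` is a child of `S`: obtained by removing one right generator. -/
def IsChild (T S : Set ℕ) : Prop :=
  ∃ μ : ℕ, IsRightGenerator S μ ∧ T = S \ {μ}

/-- A grandchild: a child of a child. -/
def IsGrandchild (T S : Set ℕ) : Prop :=
  ∃ C : Set ℕ, IsChild C S ∧ IsChild T C

/-- A great-grandchild: a child of a grandchild. -/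
def IsGreatGrandchild (T S : Set ℕ) : Prop :=
  ∃ C : Set ℕ, IsGrandchild C S ∧ IsChild T C

/-- `⟨a,b,c,…⟩|_κ`: the smallest numerical semigroup containing a given set. -/
def sgClosure (A : Set ℕ) : Set ℕ :=
  ⋂₀ {S : Set ℕ | IsNumericalSemigroup S ∧ A ⊆ S}


namespace SGaux

variable {S : Set ℕ}

lemma mem_of_le (hS : IsNumericalSemigroup S) {n : ℕ} (h : sgConductor S ≤ n) : n ∈ S := by
  obtain ⟨N, hN⟩ := hS.2.2
  have : sgConductor S ∈ {N : ℕ | ∀ n, N ≤ n → n ∈ S} := Nat.sInf_mem ⟨N, hN⟩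
  exact this n h

lemma lt_of_notMem (hS : IsNumericalSemigroup S) {n : ℕ} (h : n ∉ S) : n < sgConductor S := by
  by_contra hc
  exact h (mem_of_le hS (by omega))

lemma frob_not_mem (hS : IsNumericalSemigroup S) (hc : 1 ≤ sgConductor S) :
    sgConductor S - 1 ∉ S := by
  intro h
  have : sgConductor S ≤ sgConductor S - 1 := Nat.sInf_le (by
    intro n hn
    rcases eq_or_lt_of_le hn with h1 | h1
    · exact h1 ▸ h
    · exact mem_of_le hS (by omega))
  omega

lemma rank_eq (hS : IsNumericalSemigroup S) :
    sgRank S = (S ∩ Set.Iio (sgConductor S)).ncard := by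
  have hsub : Sᶜ ⊆ Set.Iio (sgConductor S) := fun n hn => lt_of_notMem hS hn
  have hfinIio : (Set.Iio (sgConductor S)).Finite := Set.finite_Iio _
  have hfinC : Sᶜ.Finite := hfinIio.subset hsub
  have hunion : Set.Iio (sgConductor S) = (S ∩ Set.Iio (sgConductor S)) ∪ Sᶜ := by
    ext n
    constructor
    · intro hn
      by_cases h : n ∈ S
      · exact Or.inl ⟨h, hn⟩
      · exact Or.inr h
    · rintro (⟨_, hn⟩ | hn)
      · exact hn
      · exact hsub hn
  have hdisj : Disjoint (S ∩ Set.Iio (sgConductor S)) Sᶜ := by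
    rw [Set.disjoint_left]; rintro n ⟨hn, _⟩ hn'; exact hn' hn
  have hcard : (Set.Iio (sgConductor S)).ncard
      = (S ∩ Set.Iio (sgConductor S)).ncard + Sᶜ.ncard := by
    have h := Set.ncard_union_eq hdisj (hfinIio.subset (by intro x hx; exact hx.2)) hfinC
    rw [← hunion] at h
    exact h
  have hIio : (Set.Iio (sgConductor S)).ncard = sgConductor S := by
    rw [← Finset.coe_range, Set.ncard_coe_finset, Finset.card_range]
  unfold sgRank sgGenus
  omega

end SGaux
namespace SGaux

variable {S : Set ℕ}

lemma conductor_ge_two (hS : IsNumericalSemigroup S) (hk : 2 ≤ sgRank S) :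
    2 ≤ sgConductor S := by
  unfold sgRank at hk; omega

lemma mult_mem_aux (hS : IsNumericalSemigroup S) (hc : 1 ≤ sgConductor S) :
    sgMultiplicity S ∈ S ∧ sgMultiplicity S ≠ 0 := by
  have hne : {n : ℕ | n ∈ S ∧ n ≠ 0}.Nonempty :=
    ⟨sgConductor S, mem_of_le hS le_rfl, by omega⟩
  exact Nat.sInf_mem hne

lemma mult_le (hS : IsNumericalSemigroup S) {x : ℕ} (hx : x ∈ S) (hx0 : x ≠ 0) :
    sgMultiplicity S ≤ x :=
  Nat.sInf_le ⟨hx, hx0⟩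

lemma mult_lt_conductor (hS : IsNumericalSemigroup S) (hk : 2 ≤ sgRank S) :
    sgMultiplicity S < sgConductor S := by
  have h2 : 1 < (S ∩ Set.Iio (sgConductor S)).ncard := by rw [← rank_eq hS]; omega
  have hfin : (S ∩ Set.Iio (sgConductor S)).Finite :=
    (Set.finite_Iio _).subset (fun x hx => hx.2)
  obtain ⟨y, hy, hy0⟩ := Set.exists_ne_of_one_lt_ncard h2 0
  exact lt_of_le_of_lt (mult_le hS hy.1 hy0) hy.2

lemma mingen_lt (hS : IsNumericalSemigroup S) (hc : 1 ≤ sgConductor S) {x : ℕ}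
    (hx : IsMinimalGenerator S x) : x < sgConductor S + sgMultiplicity S := by
  by_contra h
  push_neg at h
  obtain ⟨hm, hm0⟩ := mult_mem_aux hS hc
  have hmc : sgMultiplicity S ≤ sgConductor S := mult_le hS (mem_of_le hS le_rfl) (by omega)
  exact hx.2.2 ⟨sgMultiplicity S, hm, x - sgMultiplicity S, mem_of_le hS (by omega),
    hm0, by omega, by omega⟩

lemma rightgen_bounds (hS : IsNumericalSemigroup S) (hc : 1 ≤ sgConductor S) {x : ℕ}
    (hx : IsRightGenerator S x) :
    sgConductor S ≤ x ∧ x < sgConductor S + sgMultiplicity S := by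
  have h1 := hx.2
  unfold sgFrobenius at h1
  exact ⟨by omega, mingen_lt hS hc hx.1⟩

end SGaux
namespace SGaux

variable {S : Set ℕ} {μ : ℕ}

lemma rightgen_ge_c (hS : IsNumericalSemigroup S) (hc : 1 ≤ sgConductor S)
    (hμ : IsRightGenerator S μ) : sgConductor S ≤ μ := by
  have := hμ.2; unfold sgFrobenius at this; omega

lemma child_ns (hS : IsNumericalSemigroup S) (hc : 1 ≤ sgConductor S)
    (hμ : IsRightGenerator S μ) : IsNumericalSemigroup (S \ {μ}) := by
  have hμc := rightgen_ge_c hS hc hμ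
  refine ⟨⟨hS.1, ?_⟩, ?_, ⟨μ + 1, ?_⟩⟩
  · simp only [Set.mem_singleton_iff]
    intro h0
    exact hμ.1.2.1 h0.symm
  · rintro a ⟨ha, ha'⟩ b ⟨hb, hb'⟩
    refine ⟨hS.2.1 a ha b hb, ?_⟩
    simp only [Set.mem_singleton_iff] at *
    intro habμ
    have ha0 : a ≠ 0 := by rintro rfl; simp at habμ; exact hb' habμ
    have hb0 : b ≠ 0 := by rintro rfl; simp at habμ; exact ha' habμ
    exact hμ.1.2.2 ⟨a, ha, b, hb, ha0, hb0, habμ⟩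
  · intro n hn
    exact ⟨mem_of_le hS (by omega), by simp; omega⟩

lemma child_conductor (hS : IsNumericalSemigroup S) (hc : 1 ≤ sgConductor S)
    (hμ : IsRightGenerator S μ) : sgConductor (S \ {μ}) = μ + 1 := by
  have hμc := rightgen_ge_c hS hc hμ
  apply le_antisymm
  · apply Nat.sInf_le
    intro n hn
    exact ⟨mem_of_le hS (by omega), by simp; omega⟩
  · by_contra h
    push_neg at h
    have hμmem : μ ∈ S \ {μ} := mem_of_le (child_ns hS hc hμ) (by omega)
    simp at hμmem

lemma child_frobenius (hS : IsNumericalSemigroup S) (hc : 1 ≤ sgConductor S)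
    (hμ : IsRightGenerator S μ) : sgFrobenius (S \ {μ}) = μ := by
  unfold sgFrobenius; rw [child_conductor hS hc hμ]; omega

lemma child_mult (hS : IsNumericalSemigroup S) (hk : 2 ≤ sgRank S)
    (hμ : IsRightGenerator S μ) : sgMultiplicity (S \ {μ}) = sgMultiplicity S := by
  have hc : 1 ≤ sgConductor S := by have := conductor_ge_two hS hk; omega
  have hμc := rightgen_ge_c hS hc hμ
  have hmlt := mult_lt_conductor hS hk
  obtain ⟨hm, hm0⟩ := mult_mem_aux hS hc
  have hmmem : sgMultiplicity S ∈ S \ {μ} := ⟨hm, by simp; omega⟩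
  apply le_antisymm
  · exact Nat.sInf_le ⟨hmmem, hm0⟩
  · have hne : {n : ℕ | n ∈ S \ {μ} ∧ n ≠ 0}.Nonempty := ⟨_, hmmem, hm0⟩
    obtain ⟨⟨h1, _⟩, h2⟩ := Nat.sInf_mem hne
    exact mult_le hS h1 h2

lemma child_mingen_of (hS : IsNumericalSemigroup S)
    (hx : IsMinimalGenerator S x) (hne : x ≠ μ) : IsMinimalGenerator (S \ {μ}) x := by
  refine ⟨⟨hx.1, by simpa using hne⟩, hx.2.1, ?_⟩
  rintro ⟨a, ha, b, hb, ha0, hb0, hab⟩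
  exact hx.2.2 ⟨a, ha.1, b, hb.1, ha0, hb0, hab⟩

lemma child_mingen_to (hS : IsNumericalSemigroup S) (hk : 2 ≤ sgRank S)
    (hμ : IsRightGenerator S μ) {x : ℕ} (hlt : μ < x) (hub : x < μ + sgMultiplicity S)
    (hx : IsMinimalGenerator (S \ {μ}) x) : IsMinimalGenerator S x := by
  have hc : 1 ≤ sgConductor S := by have := conductor_ge_two hS hk; omega
  refine ⟨hx.1.1, hx.2.1, ?_⟩
  rintro ⟨a, ha, b, hb, ha0, hb0, hab⟩
  by_cases haμ : a = μ
  · subst haμ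
    have : sgMultiplicity S ≤ b := mult_le hS hb hb0
    omega
  by_cases hbμ : b = μ
  · subst hbμ
    have : sgMultiplicity S ≤ a := mult_le hS ha ha0
    omega
  exact hx.2.2 ⟨a, ⟨ha, by simpa using haμ⟩, b, ⟨hb, by simpa using hbμ⟩, ha0, hb0, hab⟩

lemma child_rightgen_iff (hS : IsNumericalSemigroup S) (hk : 2 ≤ sgRank S)
    (hμ : IsRightGenerator S μ) {ν : ℕ} :
    IsRightGenerator (S \ {μ}) ν ↔
      (IsRightGenerator S ν ∧ μ < ν) ∨ (ν = μ + sgMultiplicity S ∧ IsStrongGenerator S μ) := by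
  have hc : 1 ≤ sgConductor S := by have := conductor_ge_two hS hk; omega
  have hμc := rightgen_ge_c hS hc hμ
  have hT := child_ns hS hc hμ
  have hcT := child_conductor hS hc hμ
  have hmT := child_mult hS hk hμ
  have hm0 := (mult_mem_aux hS hc).2
  constructor
  · rintro ⟨hmin, hgt⟩
    rw [child_frobenius hS hc hμ] at hgt
    have hub : ν < μ + 1 + sgMultiplicity S := by
      have := mingen_lt hT (by omega) hmin
      rw [hcT, hmT] at this
      exact this
    by_cases hνeq : ν = μ + sgMultiplicity S
    · exact Or.inr ⟨hνeq, hμ, hνeq ▸ hmin⟩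
    · left
      refine ⟨⟨child_mingen_to hS hk hμ hgt (by omega) hmin, ?_⟩, hgt⟩
      unfold sgFrobenius
      omega
  · rintro (⟨hν, hlt⟩ | ⟨rfl, hstr⟩)
    · refine ⟨child_mingen_of hS hν.1 (by omega), ?_⟩
      rw [child_frobenius hS hc hμ]
      exact hlt
    · refine ⟨hstr.2, ?_⟩
      rw [child_frobenius hS hc hμ]
      omega

end SGaux
namespace SGaux

variable {S : Set ℕ}

lemma diff_diff_pair (A : Set ℕ) (μ ν : ℕ) : (A \ {μ}) \ {ν} = A \ {μ, ν} := by
  ext x; simp; tauto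

lemma grandchild_iff (hS : IsNumericalSemigroup S) (hk : 2 ≤ sgRank S) {T : Set ℕ} :
    IsGrandchild T S ↔
      (∃ μ ν : ℕ, IsRightGenerator S μ ∧ IsRightGenerator S ν ∧ μ < ν ∧ T = S \ {μ, ν}) ∨
      (∃ μ : ℕ, IsStrongGenerator S μ ∧ T = S \ {μ, μ + sgMultiplicity S}) := by
  have hc : 1 ≤ sgConductor S := by have := conductor_ge_two hS hk; omega
  constructor
  · rintro ⟨C, ⟨μ, hμ, rfl⟩, ⟨ν, hν, rfl⟩⟩
    rcases (child_rightgen_iff hS hk hμ).mp hν with ⟨hν', hlt⟩ | ⟨rfl, hstr⟩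
    · exact Or.inl ⟨μ, ν, hμ, hν', hlt, diff_diff_pair S μ ν⟩
    · exact Or.inr ⟨μ, hstr, diff_diff_pair S μ _⟩
  · rintro (⟨μ, ν, hμ, hν, hlt, rfl⟩ | ⟨μ, hstr, rfl⟩)
    · exact ⟨S \ {μ}, ⟨μ, hμ, rfl⟩,
        ⟨ν, (child_rightgen_iff hS hk hμ).mpr (Or.inl ⟨hν, hlt⟩), (diff_diff_pair S μ ν).symm⟩⟩
    · exact ⟨S \ {μ}, ⟨μ, hstr.1, rfl⟩,
        ⟨μ + sgMultiplicity S, (child_rightgen_iff hS hk hstr.1).mpr (Or.inr ⟨rfl, hstr⟩),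
          (diff_diff_pair S μ _).symm⟩⟩

end SGaux

theorem statement10 (S : Set ℕ) (hS : IsNumericalSemigroup S) (hk : 2 ≤ sgRank S)
    (r σ : ℕ)
    (hr : r = {μ : ℕ | IsRightGenerator S μ}.ncard)
    (hσ : σ = {μ : ℕ | IsStrongGenerator S μ}.ncard) :
    {T : Set ℕ | IsGrandchild T S}.ncard = r * (r - 1) / 2 + σ := by
  classical
  have hc : 1 ≤ sgConductor S := by have := SGaux.conductor_ge_two hS hk; omega
  have hm0 : sgMultiplicity S ≠ 0 := (SGaux.mult_mem_aux hS hc).2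
  -- finiteness of right generators
  have hRsub : {μ : ℕ | IsRightGenerator S μ} ⊆
      Set.Ico (sgConductor S) (sgConductor S + sgMultiplicity S) := by
    intro x hx
    obtain ⟨h1, h2⟩ := SGaux.rightgen_bounds hS hc hx
    exact ⟨h1, h2⟩
  have hRfin : {μ : ℕ | IsRightGenerator S μ}.Finite := (Set.finite_Ico _ _).subset hRsub
  have hSfin : {μ : ℕ | IsStrongGenerator S μ}.Finite :=
    hRfin.subset (fun x hx => hx.1)
  set Rf : Finset ℕ := hRfin.toFinset with hRf
  set Sgf : Finset ℕ := hSfin.toFinset with hSgf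
  have hRf_mem : ∀ x, x ∈ Rf ↔ IsRightGenerator S x := by
    intro x; rw [hRf, Set.Finite.mem_toFinset]; rfl
  have hSgf_mem : ∀ x, x ∈ Sgf ↔ IsStrongGenerator S x := by
    intro x; rw [hSgf, Set.Finite.mem_toFinset]; rfl
  set A : Finset (Set ℕ) := (Rf.powersetCard 2).image (fun t : Finset ℕ => S \ (↑t : Set ℕ)) with hA
  set B : Finset (Set ℕ) := Sgf.image (fun μ => S \ {μ, μ + sgMultiplicity S}) with hB
  -- subsets of S recovery
  have hRS : ∀ x, IsRightGenerator S x → x ∈ S := fun x hx => hx.1.1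
  have hrec : ∀ X : Set ℕ, X ⊆ S → S \ (S \ X) = X := fun X hX =>
    Set.diff_diff_cancel_left hX
  have hstrongS : ∀ μ : ℕ, IsStrongGenerator S μ → ({μ, μ + sgMultiplicity S} : Set ℕ) ⊆ S := by
    intro μ hμ x hx
    rcases hx with rfl | hx
    · exact hRS _ hμ.1
    · rcases hx with rfl
      exact SGaux.mem_of_le hS (by have := (SGaux.rightgen_bounds hS hc hμ.1).1; omega)
  -- the grandchild set equals ↑(A ∪ B)
  have hset : {T : Set ℕ | IsGrandchild T S} = ↑(A ∪ B) := by
    ext T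
    simp only [Set.mem_setOf_eq, Finset.coe_union, Set.mem_union, Finset.mem_coe]
    rw [SGaux.grandchild_iff hS hk]
    constructor
    · rintro (⟨μ, ν, hμ, hν, hlt, rfl⟩ | ⟨μ, hμ, rfl⟩)
      · left
        rw [hA, Finset.mem_image]
        refine ⟨{μ, ν}, ?_, ?_⟩
        · rw [Finset.mem_powersetCard]
          constructor
          · intro x hx
            rcases Finset.mem_insert.mp hx with rfl | hx
            · exact (hRf_mem x).mpr hμ
            · rw [Finset.mem_singleton] at hx
              subst hx
              exact (hRf_mem x).mpr hν
          · rw [Finset.card_insert_of_notMem (by simp; omega), Finset.card_singleton]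
        · simp
      · right
        rw [hB, Finset.mem_image]
        exact ⟨μ, (hSgf_mem μ).mpr hμ, rfl⟩
    · rintro (h | h)
      · left
        rw [hA, Finset.mem_image] at h
        obtain ⟨t, ht, rfl⟩ := h
        rw [Finset.mem_powersetCard] at ht
        obtain ⟨a, b, hab, rfl⟩ := Finset.card_eq_two.mp ht.2
        have ha : IsRightGenerator S a := (hRf_mem a).mp (ht.1 (by simp))
        have hb : IsRightGenerator S b := (hRf_mem b).mp (ht.1 (by simp))
        rcases lt_or_gt_of_ne hab with h | h
        · exact ⟨a, b, ha, hb, h, by simp⟩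
        · refine ⟨b, a, hb, ha, h, ?_⟩
          simp [Set.pair_comm]
      · right
        rw [hB, Finset.mem_image] at h
        obtain ⟨μ, hμ, rfl⟩ := h
        exact ⟨μ, (hSgf_mem μ).mp hμ, rfl⟩
  -- disjointness
  have hdisj : Disjoint A B := by
    rw [Finset.disjoint_left]
    intro X hXA hXB
    rw [hA, Finset.mem_image] at hXA
    rw [hB, Finset.mem_image] at hXB
    obtain ⟨t, ht, hXt⟩ := hXA
    obtain ⟨μ, hμ, hXμ⟩ := hXB
    rw [Finset.mem_powersetCard] at ht
    have htS : (↑t : Set ℕ) ⊆ S := fun x hx => hRS x ((hRf_mem x).mp (ht.1 hx))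
    have hμS := hstrongS μ ((hSgf_mem μ).mp hμ)
    have heq : (↑t : Set ℕ) = {μ, μ + sgMultiplicity S} := by
      rw [← hrec _ htS, ← hrec _ hμS, hXt, hXμ]
    have : μ + sgMultiplicity S ∈ (↑t : Set ℕ) := by rw [heq]; simp
    have hrg : IsRightGenerator S (μ + sgMultiplicity S) := (hRf_mem _).mp (ht.1 (Finset.mem_coe.mp this))
    have h1 := (SGaux.rightgen_bounds hS hc hrg).2
    have h2 := (SGaux.rightgen_bounds hS hc ((hSgf_mem μ).mp hμ).1).1
    omega
  -- cardinalities
  have hcardA : A.card = r * (r - 1) / 2 := by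
    rw [hA, Finset.card_image_of_injOn, Finset.card_powersetCard, Nat.choose_two_right]
    · congr 1
      rw [hr, Set.ncard_eq_toFinset_card _ hRfin]
    · intro t1 h1 t2 h2 heq
      simp only at heq
      rw [Finset.mem_coe, Finset.mem_powersetCard] at h1 h2
      have ht1S : (↑t1 : Set ℕ) ⊆ S := fun x hx => hRS x ((hRf_mem x).mp (h1.1 hx))
      have ht2S : (↑t2 : Set ℕ) ⊆ S := fun x hx => hRS x ((hRf_mem x).mp (h2.1 hx))
      have : (↑t1 : Set ℕ) = ↑t2 := by rw [← hrec _ ht1S, ← hrec _ ht2S, heq]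
      exact_mod_cast Finset.coe_injective this
  have hcardB : B.card = σ := by
    rw [hB, Finset.card_image_of_injOn]
    · rw [hσ, Set.ncard_eq_toFinset_card _ hSfin]
    · intro μ h1 ν h2 heq
      simp only at heq
      rw [Finset.mem_coe] at h1 h2
      have hμ := (hSgf_mem μ).mp h1
      have hν := (hSgf_mem ν).mp h2
      have hseq : ({μ, μ + sgMultiplicity S} : Set ℕ) = {ν, ν + sgMultiplicity S} := by
        rw [← hrec _ (hstrongS μ hμ), ← hrec _ (hstrongS ν hν), heq]
      have h3 : μ ∈ ({ν, ν + sgMultiplicity S} : Set ℕ) := by rw [← hseq]; simp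
      have h4 : ν ∈ ({μ, μ + sgMultiplicity S} : Set ℕ) := by rw [hseq]; simp
      simp only [Set.mem_insert_iff, Set.mem_singleton_iff] at h3 h4
      omega
  rw [hset, Set.ncard_coe_finset, Finset.card_union_of_disjoint hdisj, hcardA, hcardB]
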